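/- With notation as above, let p = #{k : j_k ≥ n+2}. Then j_{n-p} ∈ {n, n+1}; moreover j_{n-p} = n if and only if p is even, and j_{n-p} = n+1 if and only if p is odd. Also λ_{p+1} = p. -/

import Mathlib

open Finset

def Wcond (n : ℕ) (w : Equiv.Perm (Fin (2*n))) : Prop :=
  ∀ i : Fin (2*n), ((w i : ℕ) + 1) + ((w i.rev : ℕ) + 1) = 2*n + 1

def Wpar (n : ℕ) (w : Equiv.Perm (Fin (2*n))) : Prop :=
  Even ((Finset.univ.filter (fun i : Fin (2*n) => (i : ℕ) < n ∧ n ≤ (w i : ℕ))).card)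

noncomputable def jjf (n : ℕ) (w : Equiv.Perm (Fin (2*n))) (k : ℕ) : ℕ :=
  ((((Finset.univ.filter (fun i : Fin (2*n) => (i : ℕ) < n)).image w).sort (· ≤ ·)).map
    (fun x => (x : ℕ) + 1)).getD (k-1) 0

noncomputable def lamf (n : ℕ) (w : Equiv.Perm (Fin (2*n))) (k : ℕ) : ℤ :=
  if jjf n w (n+1-k) ≤ n then (jjf n w (n+1-k) : ℤ) - ((n+1-k : ℕ) : ℤ)
  else (jjf n w (n+1-k) : ℤ) - ((n+1-k : ℕ) : ℤ) - 1

noncomputable def pval (n : ℕ) (w : Equiv.Perm (Fin (2*n))) : ℕ :=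
  ((Finset.Icc 1 n).filter (fun k => n+2 ≤ jjf n w k)).card

lemma coe_list_eq {m : ℕ} (L : List (Fin m)) :
    ((do let a ← L; pure ((a:ℕ))) : List ℕ) = L.map Fin.val := by
  simp only [List.pure_def, List.bind_eq_flatMap]
  induction L with
  | nil => rfl
  | cons a l ih => simp [ih]

theorem stmt9 (n : ℕ) (hn : 1 ≤ n) (w : Equiv.Perm (Fin (2*n)))
    (hw : Wcond n w) (hpar : Wpar n w) :
    (jjf n w (n - pval n w) = n ∨ jjf n w (n - pval n w) = n + 1) ∧
    (jjf n w (n - pval n w) = n ↔ Even (pval n w)) ∧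
    (jjf n w (n - pval n w) = n + 1 ↔ Odd (pval n w)) ∧
    lamf n w (pval n w + 1) = (pval n w : ℤ) := by
  classical
  set S : Finset (Fin (2*n)) :=
    (Finset.univ.filter (fun i : Fin (2*n) => (i : ℕ) < n)).image w with hS
  -- basic mirror facts
  have hwrev : ∀ i : Fin (2*n), w i.rev = (w i).rev := by
    intro i
    have h := hw i
    have h1 := (w i).isLt
    have h2 := (w i.rev).isLt
    apply Fin.ext
    rw [Fin.val_rev]
    omega
  have hsymmrev : ∀ v : Fin (2*n), w.symm v.rev = (w.symm v).rev := by
    intro v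
    apply w.injective
    rw [Equiv.apply_symm_apply, hwrev, Equiv.apply_symm_apply]
  have hmemS : ∀ v : Fin (2*n), v ∈ S ↔ ((w.symm v : Fin (2*n)) : ℕ) < n := by
    intro v
    simp only [hS, Finset.mem_image, Finset.mem_filter, Finset.mem_univ, true_and]
    constructor
    · rintro ⟨i, hi, rfl⟩; rwa [Equiv.symm_apply_apply]
    · intro h; exact ⟨w.symm v, h, Equiv.apply_symm_apply w v⟩
  have hmirror : ∀ v : Fin (2*n), v ∈ S ↔ v.rev ∉ S := by
    intro v
    rw [hmemS, hmemS, hsymmrev]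
    have h1 := (w.symm v).isLt
    rw [Fin.val_rev]
    omega
  have hScard : S.card = n := by
    rw [hS, Finset.card_image_of_injective _ w.injective]
    have he : (Finset.univ.filter (fun i : Fin (2*n) => (i : ℕ) < n))
        = Finset.Iio (⟨n, by omega⟩ : Fin (2*n)) := by
      ext v; simp [Fin.lt_def]
    rw [he, Fin.card_Iio]
  -- the sorted list
  set L : List (Fin (2*n)) := S.sort (· ≤ ·) with hL
  have hlen : L.length = n := by rw [hL, Finset.length_sort]; exact hScard
  have hnodup : L.Nodup := Finset.sort_nodup S _
  have hsortlt : L.SortedLT := Finset.sortedLT_sort S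
  have hmono : StrictMono L.get := hsortlt.strictMono_get
  have hgetmem : ∀ (i : ℕ) (h : i < L.length), L[i] ∈ S := by
    intro i h
    have h2 : L[i] ∈ Finset.sort S (· ≤ ·) := List.getElem_mem h
    exact (Finset.mem_sort _).mp h2
  have hmono' : ∀ (a b : ℕ) (ha : a < L.length) (hb : b < L.length), a ≤ b →
      ((L[a] : Fin (2*n)) : ℕ) ≤ ((L[b] : Fin (2*n)) : ℕ) := by
    intro a b ha hb hab
    exact hmono.monotone (show (⟨a, ha⟩ : Fin L.length) ≤ ⟨b, hb⟩ from hab)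
  have hinj' : ∀ (a b : ℕ) (ha : a < L.length) (hb : b < L.length),
      (L[a] : Fin (2*n)) = L[b] → a = b := by
    intro a b ha hb h
    have := hmono.injective (show L.get ⟨a, ha⟩ = L.get ⟨b, hb⟩ from h)
    exact congrArg Fin.val this
  have hjjf : ∀ (k : ℕ) (h : k - 1 < L.length),
      jjf n w k = ((L[k-1]'h : Fin (2*n)) : ℕ) + 1 := by
    intro k h
    simp only [jjf]
    rw [← hS, ← hL, coe_list_eq]
    rw [List.getD_eq_getElem _ _ (by simp only [List.length_map]; exact h)]
    simp only [List.getElem_map]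
  -- counting sets
  set A : Finset (Fin (2*n)) := S.filter (fun v => n+1 ≤ (v : ℕ)) with hA
  set B : Finset (Fin (2*n)) := S.filter (fun v => (v : ℕ) + 2 ≤ n) with hB
  have h2n : 0 < 2*n := by omega
  set d0 : Fin (2*n) := ⟨0, h2n⟩ with hd0
  have hpA : pval n w = A.card := by
    simp only [pval]
    apply Finset.card_bij'
      (i := fun k _ => L.getD (k-1) d0)
      (j := fun v _ => List.idxOf v L + 1)
    case hi =>
      intro k hk
      simp only [Finset.mem_filter, Finset.mem_Icc] at hk
      have hki : k - 1 < L.length := by rw [hlen]; omega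
      have hval := hjjf k hki
      show L.getD (k-1) d0 ∈ A
      rw [List.getD_eq_getElem _ _ hki]
      simp only [hA, Finset.mem_filter]
      refine ⟨hgetmem _ _, ?_⟩
      omega
    case hj =>
      intro v hv
      simp only [hA, Finset.mem_filter] at hv
      obtain ⟨hv1, hv2⟩ := hv
      have hvL : v ∈ L := by rw [hL]; exact (Finset.mem_sort _).mpr hv1
      have hidx : List.idxOf v L < L.length := List.idxOf_lt_length_iff.mpr hvL
      simp only [Finset.mem_filter, Finset.mem_Icc]
      have hidx' : List.idxOf v L + 1 - 1 < L.length := by omega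
      have hval := hjjf (List.idxOf v L + 1) hidx'
      have hget : (L[List.idxOf v L + 1 - 1]'hidx' : Fin (2*n)) = v :=
        List.getElem_idxOf hidx
      rw [hget] at hval
      have hlen' := hlen
      refine ⟨⟨by omega, by omega⟩, by omega⟩
    case left_inv =>
      intro k hk
      simp only [Finset.mem_filter, Finset.mem_Icc] at hk
      have hki : k - 1 < L.length := by rw [hlen]; omega
      show List.idxOf (L.getD (k-1) d0) L + 1 = k
      rw [List.getD_eq_getElem _ _ hki]
      have h3 : List.idxOf (L[k-1]'hki) L = k - 1 := List.get_idxOf hnodup ⟨k-1, hki⟩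
      omega
    case right_inv =>
      intro v hv
      simp only [hA, Finset.mem_filter] at hv
      have hvL : v ∈ L := by rw [hL]; exact (Finset.mem_sort _).mpr hv.1
      have hidx : List.idxOf v L < L.length := List.idxOf_lt_length_iff.mpr hvL
      have hidx2 : List.idxOf v L + 1 - 1 < L.length := by omega
      show L.getD (List.idxOf v L + 1 - 1) d0 = v
      rw [List.getD_eq_getElem _ _ hidx2]
      exact List.getElem_idxOf hidx
  -- cardinality of the upper half
  have hCcard : (Finset.univ.filter (fun v : Fin (2*n) => n+1 ≤ (v : ℕ))).card = n - 1 := by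
    have hneg : (Finset.univ.filter (fun v : Fin (2*n) => ¬ (n+1 ≤ (v : ℕ))))
        = Finset.Iic (⟨n, by omega⟩ : Fin (2*n)) := by
      ext v
      simp only [Finset.mem_filter, Finset.mem_univ, true_and, Finset.mem_Iic, Fin.le_def]
      omega
    have hsum := Finset.card_filter_add_card_filter_not
      (s := (Finset.univ : Finset (Fin (2*n)))) (fun v : Fin (2*n) => n+1 ≤ (v : ℕ))
    rw [hneg, Fin.card_Iic] at hsum
    simp only [Finset.card_univ, Fintype.card_fin] at hsum
    omega
  have hABsum : A.card + B.card = n - 1 := by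
    set C : Finset (Fin (2*n)) := Finset.univ.filter (fun v : Fin (2*n) => n+1 ≤ (v : ℕ)) with hC
    have hA2 : A = C.filter (fun v => v ∈ S) := by
      ext v
      simp only [hA, hC, Finset.mem_filter, Finset.mem_univ, true_and]
      tauto
    have hD : B.card = (C.filter (fun v => v ∉ S)).card := by
      apply Finset.card_bij' (i := fun v _ => v.rev) (j := fun v _ => v.rev)
      case hi =>
        intro v hv
        simp only [hB, Finset.mem_filter] at hv
        have h1 := v.isLt
        simp only [hC, Finset.mem_filter, Finset.mem_univ, true_and]
        constructor
        · rw [Fin.val_rev]; omega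
        · exact (hmirror v).mp hv.1
      case hj =>
        intro v hv
        simp only [hC, Finset.mem_filter, Finset.mem_univ, true_and] at hv
        have h1 := v.isLt
        simp only [hB, Finset.mem_filter]
        constructor
        · have h2 := hmirror v.rev
          rw [Fin.rev_rev] at h2
          tauto
        · rw [Fin.val_rev]; omega
      case left_inv => intro v _; exact Fin.rev_rev v
      case right_inv => intro v _; exact Fin.rev_rev v
    have hsum := Finset.card_filter_add_card_filter_not
      (s := C) (fun v : Fin (2*n) => v ∈ S)
    rw [← hA2] at hsum
    have hCc : C.card = n - 1 := hCcard
    rw [hD]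
    omega
  set p : ℕ := pval n w with hp
  have hple : p ≤ n - 1 := by rw [hpA]; omega
  have hidxp : n - p - 1 < L.length := by rw [hlen]; omega
  set x : Fin (2*n) := L[n - p - 1]'hidxp with hx
  have hxS : x ∈ S := hgetmem _ _
  -- upper bound on x
  have hxle : (x : ℕ) ≤ n := by
    by_contra hcon
    push_neg at hcon
    have hcard_le : (Finset.Icc (n-p-1) (n-1)).card ≤ A.card := by
      apply Finset.card_le_card_of_injOn (fun i => L.getD i x)
      · intro i hi
        rw [Finset.mem_coe, Finset.mem_Icc] at hi
        have hi' : i < L.length := by rw [hlen]; omega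
        show L.getD i x ∈ A
        rw [List.getD_eq_getElem _ _ hi']
        simp only [hA, Finset.mem_filter]
        refine ⟨hgetmem i hi', ?_⟩
        have hle2 := hmono' (n-p-1) i hidxp hi' (by omega)
        rw [← hx] at hle2
        omega
      · intro a ha b hb hab
        simp only [Finset.coe_Icc, Set.mem_Icc] at ha hb
        have ha' : a < L.length := by rw [hlen]; omega
        have hb' : b < L.length := by rw [hlen]; omega
        have hab' : L.getD a x = L.getD b x := hab
        rw [List.getD_eq_getElem _ _ ha', List.getD_eq_getElem _ _ hb'] at hab'
        exact hinj' a b ha' hb' hab'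
    rw [Nat.card_Icc] at hcard_le
    omega
  -- lower bound on x
  have hxge : n - 1 ≤ (x : ℕ) := by
    by_contra hcon
    push_neg at hcon
    have hcard_le : (Finset.Icc 0 (n-p-1)).card ≤ B.card := by
      apply Finset.card_le_card_of_injOn (fun i => L.getD i x)
      · intro i hi
        rw [Finset.mem_coe, Finset.mem_Icc] at hi
        have hi' : i < L.length := by rw [hlen]; omega
        show L.getD i x ∈ B
        rw [List.getD_eq_getElem _ _ hi']
        simp only [hB, Finset.mem_filter]
        refine ⟨hgetmem i hi', ?_⟩
        have hle2 := hmono' i (n-p-1) hi' hidxp (by omega)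
        rw [← hx] at hle2
        omega
      · intro a ha b hb hab
        simp only [Finset.coe_Icc, Set.mem_Icc] at ha hb
        have ha' : a < L.length := by rw [hlen]; omega
        have hb' : b < L.length := by rw [hlen]; omega
        have hab' : L.getD a x = L.getD b x := hab
        rw [List.getD_eq_getElem _ _ ha', List.getD_eq_getElem _ _ hb'] at hab'
        exact hinj' a b ha' hb' hab'
    rw [Nat.card_Icc] at hcard_le
    omega
  -- the two middle values
  set vn : Fin (2*n) := ⟨n, by omega⟩ with hvn
  set vn1 : Fin (2*n) := ⟨n-1, by omega⟩ with hvn1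
  have hvnval : (vn : ℕ) = n := by rw [hvn]
  have hvn1val : (vn1 : ℕ) = n - 1 := by rw [hvn1]
  have hWA : (Finset.univ.filter (fun i : Fin (2*n) => (i : ℕ) < n ∧ n ≤ (w i : ℕ))).card
      = (S.filter (fun v : Fin (2*n) => n ≤ (v : ℕ))).card := by
    apply Finset.card_bij' (i := fun i _ => w i) (j := fun v _ => w.symm v)
    case hi =>
      intro i hi
      simp only [Finset.mem_filter, Finset.mem_univ, true_and] at hi
      rw [Finset.mem_filter]
      exact ⟨(hmemS (w i)).mpr (by rw [Equiv.symm_apply_apply]; exact hi.1), hi.2⟩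
    case hj =>
      intro v hv
      rw [Finset.mem_filter] at hv
      simp only [Finset.mem_filter, Finset.mem_univ, true_and]
      exact ⟨(hmemS v).mp hv.1, by rw [Equiv.apply_symm_apply]; exact hv.2⟩
    case left_inv => intro i _; exact Equiv.symm_apply_apply w i
    case right_inv => intro v _; exact Equiv.apply_symm_apply w v
  have hsplitcard : (S.filter (fun v : Fin (2*n) => n ≤ (v : ℕ))).card
      = A.card + (if vn ∈ S then 1 else 0) := by
    have hsplit : S.filter (fun v : Fin (2*n) => n ≤ (v : ℕ)) = A ∪ S.filter (fun v => v = vn) := by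
      ext v
      simp only [hA, Finset.mem_union, Finset.mem_filter, Fin.ext_iff]
      constructor
      · rintro ⟨h1, h2⟩
        rcases Nat.lt_or_ge (v : ℕ) (n+1) with h | h
        · exact Or.inr ⟨h1, by omega⟩
        · exact Or.inl ⟨h1, h⟩
      · rintro (⟨h1, h2⟩ | ⟨h1, h2⟩) <;> exact ⟨h1, by omega⟩
    have hdisj : Disjoint A (S.filter (fun v => v = vn)) := by
      rw [Finset.disjoint_left]
      intro v hv1 hv2
      simp only [hA, Finset.mem_filter] at hv1 hv2
      rw [hv2.2] at hv1
      omega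
    rw [hsplit, Finset.card_union_of_disjoint hdisj, Finset.filter_eq']
    split_ifs <;> simp
  have hvnodd : (vn ∈ S) ↔ Odd p := by
    have hpar' := hpar
    unfold Wpar at hpar'
    rw [hWA, hsplitcard, ← hpA] at hpar'
    by_cases hvnS : vn ∈ S
    · simp only [hvnS, if_true] at hpar'
      have h := Nat.even_iff.mp hpar'
      exact ⟨fun _ => Nat.odd_iff.mpr (by omega), fun _ => hvnS⟩
    · simp only [hvnS, if_false, add_zero] at hpar'
      constructor
      · intro h; exact absurd h hvnS
      · intro hodd; exact absurd hpar' (Nat.not_even_iff_odd.mpr hodd)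
  have hvn1S : vn1 ∈ S ↔ vn ∉ S := by
    have h := hmirror vn1
    have hrev : vn1.rev = vn := by
      apply Fin.ext
      rw [Fin.val_rev]
      omega
    rwa [hrev] at h
  -- the value of jjf (n - p)
  have hjval : jjf n w (n - p) = (x : ℕ) + 1 := by
    have h := hjjf (n - p) hidxp
    rw [← hx] at h
    exact h
  rcases Nat.even_or_odd p with hev | hod
  · -- p even : vn ∉ S, x = vn1
    have hvnS : vn ∉ S := fun h => (Nat.not_even_iff_odd.mpr (hvnodd.mp h)) hev
    have hxval : (x : ℕ) = n - 1 := by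
      by_contra hne
      have h1 : (x : ℕ) = n := by omega
      have h2 : x = vn := Fin.ext (by omega)
      rw [h2] at hxS
      exact hvnS hxS
    have hjn : jjf n w (n - p) = n := by omega
    refine ⟨Or.inl hjn, ⟨fun _ => hev, fun _ => hjn⟩, ?_, ?_⟩
    · constructor
      · intro h; omega
      · intro h; exact absurd hev (Nat.not_even_iff_odd.mpr h)
    · simp only [lamf]
      rw [show n + 1 - (p + 1) = n - p from by omega, hjn]
      split_ifs with h <;> omega
  · -- p odd : vn ∈ S, vn1 ∉ S, x = vn
    have hvnS : vn ∈ S := hvnodd.mpr hod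
    have hvn1notS : vn1 ∉ S := fun h => (hvn1S.mp h) hvnS
    have hxval : (x : ℕ) = n := by
      by_contra hne
      have h1 : (x : ℕ) = n - 1 := by omega
      have h2 : x = vn1 := Fin.ext (by omega)
      rw [h2] at hxS
      exact hvn1notS hxS
    have hjn : jjf n w (n - p) = n + 1 := by omega
    refine ⟨Or.inr hjn, ?_, ⟨fun _ => hod, fun _ => hjn⟩, ?_⟩
    · constructor
      · intro h; omega
      · intro h; exact absurd h (Nat.not_even_iff_odd.mpr hod)
    · simp only [lamf]
      rw [show n + 1 - (p + 1) = n - p from by omega, hjn]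
      split_ifs with h <;> omega
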